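/- For 0 < σ ≤ 10⁻³ (earth-like oblateness), every c² ∈ [0,1] satisfies |k(c²,σ) − 1| ≤ 4σ, where k(c²,σ) = √(1 + σ(1/2 − (3/2)c²))/(1 − σ(1/2 − 3c²)). Consequently any rational resonance k = p/q with |p/q − 1| > 4σ admits no real inclination solution. -/
import Mathlib


open Real

theorem only_one_to_one_resonance_for_small_oblateness (σ : ℝ)
    (hσ0 : 0 < σ) (hσ1 : σ ≤ 1/1000) :
    (∀ c2 ∈ Set.Icc (0:ℝ) 1,
      |Real.sqrt (1 + σ * (1/2 - (3/2) * c2)) / (1 - σ * (1/2 - 3 * c2)) - 1| ≤ 4*σ) ∧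
    (∀ p q : ℕ, 0 < q → |(p : ℝ)/(q : ℝ) - 1| > 4*σ →
      ¬ ∃ c2 ∈ Set.Icc (0:ℝ) 1,
        Real.sqrt (1 + σ * (1/2 - (3/2) * c2)) / (1 - σ * (1/2 - 3 * c2))
          = (p : ℝ)/(q : ℝ)) := by
  have main : ∀ c2 ∈ Set.Icc (0:ℝ) 1,
      |Real.sqrt (1 + σ * (1/2 - (3/2) * c2)) / (1 - σ * (1/2 - 3 * c2)) - 1| ≤ 4*σ := by
    rintro c2 ⟨hc0, hc1⟩
    set x : ℝ := σ * (1/2 - (3/2) * c2) with hx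
    set d : ℝ := 1 - σ * (1/2 - 3 * c2) with hd
    have hd0 : 0 < d := by
      simp only [hd]; nlinarith
    have hxlb : -σ ≤ x := by simp only [hx]; nlinarith
    have hxub : x ≤ σ/2 := by simp only [hx]; nlinarith
    -- upper bound on sqrt
    have hsub : Real.sqrt (1 + x) ≤ 1 + x/2 := by
      have h1 : (1 : ℝ) + x ≤ (1 + x/2)^2 := by nlinarith [sq_nonneg x]
      calc Real.sqrt (1 + x) ≤ Real.sqrt ((1 + x/2)^2) := Real.sqrt_le_sqrt h1
        _ = 1 + x/2 := Real.sqrt_sq (by nlinarith)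
    -- lower bound on sqrt
    have hslb : 1 - σ ≤ Real.sqrt (1 + x) := by
      have h1 : (1 - σ)^2 ≤ 1 + x := by nlinarith
      calc (1 - σ) = Real.sqrt ((1 - σ)^2) := (Real.sqrt_sq (by nlinarith)).symm
        _ ≤ Real.sqrt (1 + x) := Real.sqrt_le_sqrt h1
    rw [abs_le]
    constructor
    · rw [le_sub_iff_add_le, le_div_iff₀ hd0]
      have h2 : (1 - 4*σ) * d ≤ 1 - σ := by simp only [hd]; nlinarith
      calc (-(4*σ) + 1) * d = (1 - 4*σ) * d := by ring
        _ ≤ 1 - σ := h2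
        _ ≤ Real.sqrt (1 + x) := hslb
    · rw [sub_le_iff_le_add, div_le_iff₀ hd0]
      have : 1 + x/2 ≤ (4*σ + 1) * d := by simp only [hd, hx]; nlinarith
      exact le_trans hsub this
  refine ⟨main, ?_⟩
  rintro p q hq hfar ⟨c2, hc2, heq⟩
  have := main c2 hc2
  rw [heq] at this
  linarith [abs_nonneg ((p:ℝ)/(q:ℝ) - 1)]
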